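/- Suppose f is L-smooth, satisfies the PL condition ½‖∇f(x)‖² ≥ μ(f(x) − f★) with minimum f★, and g is unbiased with E‖g(x)‖² ≤ 2A(f(x) − f★) + B‖∇f(x)‖² + C. Then one SGD step with stepsize γ_k ≤ min{μ/(2AL), 1/(2BL)} satisfies E[f(x_{k+1})] − f★ ≤ (1 − γ_kμ)(E[f(x_k)] − f★) + Lγ_k²C/2. -/

import Mathlib

open MeasureTheory
open scoped ENNReal
set_option maxHeartbeats 1000000

lemma descent {d : ℕ} (f : EuclideanSpace ℝ (Fin d) → ℝ) (L : ℝ) (hL : 0 ≤ L)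
    (hdiff : Differentiable ℝ f)
    (hlip : ∀ x y, ‖gradient f x - gradient f y‖ ≤ L * ‖x - y‖)
    (x y : EuclideanSpace ℝ (Fin d)) :
    f y ≤ f x + inner ℝ (gradient f x) (y - x) + L / 2 * ‖y - x‖ ^ 2 := by
  set v := y - x with hv
  have hgradcont : Continuous (gradient f) := by
    have : LipschitzWith L.toNNReal (gradient f) := by
      apply LipschitzWith.of_dist_le_mul
      intro a b
      simpa [dist_eq_norm, Real.coe_toNNReal L hL] using hlip a b
    exact this.continuous
  have hφ : ∀ t : ℝ, HasDerivAt (fun t : ℝ => f (x + t • v))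
      (inner ℝ (gradient f (x + t • v)) v : ℝ) t := by
    intro t
    have h1 : HasDerivAt (fun t : ℝ => x + t • v) v t := by
      simpa using ((hasDerivAt_id t).smul_const v).const_add x
    have h2 := (hdiff (x + t • v)).hasFDerivAt.comp_hasDerivAt t h1
    have h3 : fderiv ℝ f (x + t • v) v = inner ℝ (gradient f (x + t • v)) v := by
      rw [gradient]
      simp [InnerProductSpace.toDual_apply_apply]
    rwa [h3] at h2
  have hcont : Continuous fun t : ℝ => (inner ℝ (gradient f (x + t • v)) v : ℝ) := by
    exact (continuous_inner.comp ((hgradcont.comp (by continuity)).prodMk continuous_const))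
  have hFTC : f y - f x = ∫ t in (0:ℝ)..1, (inner ℝ (gradient f (x + t • v)) v : ℝ) := by
    have := intervalIntegral.integral_eq_sub_of_hasDerivAt
      (f := fun t : ℝ => f (x + t • v)) (fun t _ => hφ t)
      (hcont.intervalIntegrable 0 1)
    rw [this]
    simp [hv]
  have hbound : ∀ t ∈ Set.Icc (0:ℝ) 1,
      (inner ℝ (gradient f (x + t • v)) v : ℝ)
        ≤ inner ℝ (gradient f x) v + L * t * ‖v‖ ^ 2 := by
    intro t ht
    have h1 : (inner ℝ (gradient f (x + t • v)) v : ℝ) - inner ℝ (gradient f x) v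
        = inner ℝ (gradient f (x + t • v) - gradient f x) v := by
      rw [inner_sub_left]
    have h2 : (inner ℝ (gradient f (x + t • v) - gradient f x) v : ℝ)
        ≤ ‖gradient f (x + t • v) - gradient f x‖ * ‖v‖ := real_inner_le_norm _ _
    have h3 : ‖gradient f (x + t • v) - gradient f x‖ ≤ L * (t * ‖v‖) := by
      have := hlip (x + t • v) x
      simpa [norm_smul, abs_of_nonneg ht.1] using this
    nlinarith [norm_nonneg v, mul_le_mul_of_nonneg_right h3 (norm_nonneg v)]
  have hInt : (∫ t in (0:ℝ)..1, (inner ℝ (gradient f (x + t • v)) v : ℝ))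
      ≤ ∫ t in (0:ℝ)..1, (inner ℝ (gradient f x) v + L * t * ‖v‖ ^ 2) := by
    apply intervalIntegral.integral_mono_on (by norm_num)
      (hcont.intervalIntegrable 0 1)
      ((continuous_const.add ((continuous_const.mul continuous_id).mul continuous_const) : Continuous fun t : ℝ => (inner ℝ (gradient f x) v : ℝ) + L * t * ‖v‖ ^ 2).intervalIntegrable 0 1)
      hbound
  have hval : (∫ t in (0:ℝ)..1, (inner ℝ (gradient f x) v + L * t * ‖v‖ ^ 2) : ℝ)
      = inner ℝ (gradient f x) v + L / 2 * ‖v‖ ^ 2 := by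
    have h1 : ∀ t : ℝ, (inner ℝ (gradient f x) v : ℝ) + L * t * ‖v‖ ^ 2
        = inner ℝ (gradient f x) v + (L * ‖v‖ ^ 2) * t := fun t => by ring
    simp_rw [h1]
    rw [intervalIntegral.integral_add intervalIntegrable_const
      ((by fun_prop : Continuous fun t : ℝ => L * ‖v‖ ^ 2 * t).intervalIntegrable 0 1),
      intervalIntegral.integral_const_mul, integral_id]
    simp
    ring
  linarith [hFTC ▸ le_trans hInt (le_of_eq hval)]

theorem stmt15 {d : ℕ} {Ω : Type*} [MeasureSpace Ω]
    [IsProbabilityMeasure (volume : Measure Ω)]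
    (f : EuclideanSpace ℝ (Fin d) → ℝ) (L μ fstar A B C : ℝ)
    (hL : 0 < L) (hμ : 0 < μ) (hA : 0 ≤ A) (hB : 0 ≤ B) (hC : 0 ≤ C)
    (hdiff : Differentiable ℝ f)
    (hlip : ∀ x y, ‖gradient f x - gradient f y‖ ≤ L * ‖x - y‖)
    (hmin : ∀ x, fstar ≤ f x) (hatt : ∃ xstar, f xstar = fstar)
    (hPL : ∀ x, μ * (f x - fstar) ≤ (1 / 2) * ‖gradient f x‖ ^ 2)
    (γ : ℝ) (hγ0 : 0 < γ)
    (hγ : γ ≤ min (μ / (2 * A * L)) (1 / (2 * B * L)))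
    (xk : EuclideanSpace ℝ (Fin d)) (g : Ω → EuclideanSpace ℝ (Fin d))
    (hg2 : MemLp g 2 volume)
    (hunb : (∫ ω, g ω) = gradient f xk)
    (hES : (∫ ω, ‖g ω‖ ^ 2) ≤ 2 * A * (f xk - fstar) + B * ‖gradient f xk‖ ^ 2 + C) :
    (∫ ω, f (xk - γ • g ω)) - fstar
      ≤ (1 - γ * μ) * (f xk - fstar) + L * γ ^ 2 * C / 2 := by
  have hle1 : γ ≤ μ / (2 * A * L) := le_trans hγ (min_le_left _ _)
  have hle2 : γ ≤ 1 / (2 * B * L) := le_trans hγ (min_le_right _ _)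
  have hApos : 0 < A := by
    rcases hA.lt_or_eq with h | h
    · exact h
    · exfalso; rw [← h] at hle1; simp at hle1; linarith
  have hBpos : 0 < B := by
    rcases hB.lt_or_eq with h | h
    · exact h
    · exfalso; rw [← h] at hle2; simp at hle2; linarith
  have hAL : 0 < 2 * A * L := by positivity
  have hBL : 0 < 2 * B * L := by positivity
  have h2AL : γ * (2 * A * L) ≤ μ := (le_div_iff₀ hAL).mp hle1
  have h2BL : γ * (2 * B * L) ≤ 1 := (le_div_iff₀ hBL).mp hle2
  set G : EuclideanSpace ℝ (Fin d) := gradient f xk with hG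
  set N : ℝ := ‖G‖ ^ 2 with hN
  set Δ : ℝ := f xk - fstar with hΔ
  have hΔ0 : 0 ≤ Δ := sub_nonneg.mpr (hmin xk)
  have hN0 : 0 ≤ N := sq_nonneg _
  have hgi : Integrable g := hg2.integrable (by norm_num)
  have hsq : Integrable (fun ω => ‖g ω‖ ^ 2) := by
    have h := hg2.integrable_norm_rpow (by norm_num) (by norm_num)
    have h2 : (2 : ℝ≥0∞).toReal = ((2 : ℕ) : ℝ) := by norm_num
    simpa [h2, Real.rpow_natCast] using h
  have hinner : Integrable (fun ω => (inner ℝ G (g ω) : ℝ)) := hgi.const_inner G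
  -- the upper bound function
  set h : Ω → ℝ := fun ω =>
    f xk - γ * (inner ℝ G (g ω) : ℝ) + L * γ ^ 2 / 2 * ‖g ω‖ ^ 2 with hh
  have hptw : ∀ ω, f (xk - γ • g ω) ≤ h ω := by
    intro ω
    have hd := descent f L hL.le hdiff hlip xk (xk - γ • g ω)
    have e1 : xk - γ • g ω - xk = -(γ • g ω) := by abel
    rw [e1] at hd
    have e2 : (inner ℝ G (-(γ • g ω)) : ℝ) = -(γ * inner ℝ G (g ω)) := by
      rw [inner_neg_right, real_inner_smul_right]
    have e3 : ‖-(γ • g ω)‖ ^ 2 = γ ^ 2 * ‖g ω‖ ^ 2 := by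
      rw [norm_neg, norm_smul]
      simp [abs_of_nonneg hγ0.le, mul_pow]
    rw [e2, e3] at hd
    simp only [hh]
    linarith
  have hhint : Integrable h := by
    exact ((integrable_const (f xk)).sub (hinner.const_mul γ)).add (hsq.const_mul _)
  have hlhs_meas : AEStronglyMeasurable (fun ω => f (xk - γ • g ω)) volume := by
    exact hdiff.continuous.comp_aestronglyMeasurable
      (aestronglyMeasurable_const.sub (hg2.aestronglyMeasurable.const_smul γ))
  have hlhs_int : Integrable (fun ω => f (xk - γ • g ω)) := by
    apply Integrable.mono' ((integrable_const |fstar|).add hhint.abs) hlhs_meas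
    filter_upwards with ω
    simp only [Pi.add_apply]
    have h1 := hptw ω
    have h2 := hmin (xk - γ • g ω)
    rw [Real.norm_eq_abs, abs_le]
    constructor
    · have := abs_nonneg (h ω); have := neg_abs_le fstar; linarith
    · have := le_abs_self (h ω); have := abs_nonneg fstar; linarith
  have hIle : (∫ ω, f (xk - γ • g ω)) ≤ ∫ ω, h ω :=
    integral_mono hlhs_int hhint hptw
  have hIh : (∫ ω, h ω) = f xk - γ * N + L * γ ^ 2 / 2 * ∫ ω, ‖g ω‖ ^ 2 := by
    have F1 : Integrable (fun ω => f xk - γ * (inner ℝ G (g ω) : ℝ)) volume := by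
      exact (integrable_const (f xk)).sub (hinner.const_mul γ)
    have F2 : Integrable (fun ω => γ * (inner ℝ G (g ω) : ℝ)) volume := hinner.const_mul γ
    simp only [hh]
    rw [integral_add F1 (hsq.const_mul _),
      integral_sub (integrable_const (f xk)) F2,
      integral_const_mul, integral_const_mul, integral_inner hgi, hunb,
      integral_const, probReal_univ, real_inner_self_eq_norm_sq]
    simp [hN]
  have hSc : L * γ ^ 2 / 2 * (∫ ω, ‖g ω‖ ^ 2)
      ≤ L * γ ^ 2 / 2 * (2 * A * Δ + B * N + C) :=
    mul_le_mul_of_nonneg_left hES (by positivity)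
  have e1 : L * γ ^ 2 * A ≤ γ * μ / 2 := by nlinarith
  have e2 : L * γ ^ 2 * B / 2 ≤ γ / 4 := by nlinarith
  have hPLk : μ * Δ ≤ (1 / 2) * N := hPL xk
  nlinarith [mul_le_mul_of_nonneg_right e1 hΔ0, mul_le_mul_of_nonneg_right e2 hN0,
    mul_le_mul_of_nonneg_left hPLk hγ0.le]
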